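/- Let X, W be Banach spaces and T ∈ L(X,W). If there exists a sequence (S_N) of finite-rank operators X → W with S_N x → T x for every x ∈ X and sup_N ‖S_N‖ < ∞, then T admits an O-frame: there exist rank-one operators à _s = x'_s ⊗ w_s such that Tx = ∑_{s=1}^∞ ⟨x'_s, x⟩ w_s for every x ∈ X, with the partial-sum operators uniformly bounded by 5·sup_N ‖S_N‖ (when ‖T‖ = 1, C = sup‖S_N‖). -/

import Mathlib

open Filter Topology

/-- O-frame: for every x, the series converges in norm to T x. -/
def IsOFrame {X W : Type*} [NormedAddCommGroup X] [NormedSpace ℝ X]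
    [NormedAddCommGroup W] [NormedSpace ℝ W]
    (T : X →L[ℝ] W) (x' : ℕ → (X →L[ℝ] ℝ)) (w : ℕ → W) : Prop :=
  ∀ x : X, Tendsto (fun N => ∑ k ∈ Finset.range N, x' k x • w k) atTop (𝓝 (T x))

/-- A continuous linear map has finite rank if its range is finite-dimensional. -/
def IsFiniteRank {X W : Type*} [NormedAddCommGroup X] [NormedSpace ℝ X]
    [NormedAddCommGroup W] [NormedSpace ℝ W] (R : X →L[ℝ] W) : Prop :=
  FiniteDimensional ℝ (LinearMap.range (R : X →ₗ[ℝ] W))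

/-- Sum of a periodic-indexed sequence over an initial segment. -/
lemma sum_range_mod' {M : Type*} [AddCommMonoid M] (u : ℕ → M) (n r : ℕ) :
    ∑ s ∈ Finset.range r, u (s % n) =
      (r / n) • ∑ i ∈ Finset.range n, u i + ∑ i ∈ Finset.range (r % n), u i := by
  rcases Nat.eq_zero_or_pos n with hn | hn
  · subst hn; simp
  have key : ∀ q : ℕ, ∑ s ∈ Finset.range (n * q), u (s % n)
      = q • ∑ i ∈ Finset.range n, u i := by
    intro q
    induction q with
    | zero => simp
    | succ q ih =>
      rw [Nat.mul_succ, Finset.sum_range_add, ih, succ_nsmul]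
      congr 1
      refine Finset.sum_congr rfl fun i hi => ?_
      congr 1
      rw [Nat.add_comm, Nat.add_mul_mod_self_left]
      exact Nat.mod_eq_of_lt (Finset.mem_range.mp hi)
  conv_lhs => rw [← Nat.div_add_mod r n]
  rw [Finset.sum_range_add, key]
  congr 1
  refine Finset.sum_congr rfl fun i hi => ?_
  congr 1
  rw [Nat.add_comm, Nat.add_mul_mod_self_left]
  exact Nat.mod_eq_of_lt (lt_trans (Finset.mem_range.mp hi) (Nat.mod_lt _ hn))

lemma exists_rank_one_decomp {X W : Type*} [NormedAddCommGroup X] [NormedSpace ℝ X]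
    [NormedAddCommGroup W] [NormedSpace ℝ W]
    (R : X →L[ℝ] W) (h : IsFiniteRank R) :
    ∃ (n : ℕ) (g : ℕ → (X →L[ℝ] ℝ)) (v : ℕ → W), 0 < n ∧
      R = ∑ i ∈ Finset.range n, (g i).smulRight (v i) := by
  haveI : FiniteDimensional ℝ (LinearMap.range (R : X →ₗ[ℝ] W)) := h
  set E : Submodule ℝ W := LinearMap.range (R : X →ₗ[ℝ] W) with hE
  let d : ℕ := Module.finrank ℝ E
  let b : Module.Basis (Fin d) ℝ E := Module.finBasis ℝ E
  have hmem : ∀ x : X, R x ∈ E := fun x => LinearMap.mem_range_self (R : X →ₗ[ℝ] W) x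
  let Rc : X →L[ℝ] E := R.codRestrict E hmem
  let g : ℕ → (X →L[ℝ] ℝ) := fun i =>
    if hi : i < d then (LinearMap.toContinuousLinearMap (b.coord ⟨i, hi⟩)).comp Rc else 0
  let v : ℕ → W := fun i => if hi : i < d then (b ⟨i, hi⟩ : W) else 0
  refine ⟨d + 1, g, v, Nat.succ_pos d, ?_⟩
  ext x
  rw [ContinuousLinearMap.sum_apply, Finset.sum_range_succ]
  have hlast : ((g d).smulRight (v d)) x = 0 := by
    simp [g, v]
  rw [hlast, add_zero]
  have hRx : R x = ((Rc x : E) : W) := rfl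
  rw [← Fin.sum_univ_eq_sum_range (fun i => ((g i).smulRight (v i)) x) d, hRx,
    ← b.sum_repr (Rc x), AddSubmonoidClass.coe_finset_sum]
  refine Finset.sum_congr rfl fun i _ => ?_
  simp [g, v, i.isLt]

set_option maxHeartbeats 2000000 in
/-- If `T` is the pointwise limit of a uniformly bounded (by `C`) sequence of
finite-rank operators, then `T` admits an O-frame of rank-one operators whose
partial-sum operators are uniformly bounded by `5 * C`. -/
theorem oframe_of_uniformly_bounded_pointwise_approx {X W : Type*}
    [NormedAddCommGroup X] [NormedSpace ℝ X] [CompleteSpace X]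
    [NormedAddCommGroup W] [NormedSpace ℝ W] [CompleteSpace W]
    (T : X →L[ℝ] W) (S : ℕ → (X →L[ℝ] W)) (C : ℝ)
    (hfr : ∀ N, IsFiniteRank (S N))
    (hconv : ∀ x : X, Tendsto (fun N => S N x) atTop (𝓝 (T x)))
    (hnorm : ∀ N, ‖S N‖ ≤ C) :
    ∃ (x' : ℕ → (X →L[ℝ] ℝ)) (w : ℕ → W),
      IsOFrame T x' w ∧
      ∀ n, ‖∑ s ∈ Finset.range n, (x' s).smulRight (w s)‖ ≤ 5 * C := by
  have hC0 : 0 ≤ C := le_trans (norm_nonneg _) (hnorm 0)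
  rcases eq_or_lt_of_le hC0 with hC | hC
  · -- degenerate case C = 0
    have hS0 : ∀ N, S N = (0 : X →L[ℝ] W) := fun N =>
      norm_le_zero_iff.mp (hC ▸ hnorm N)
    have hT0 : ∀ x : X, T x = 0 := by
      intro x
      have h1 := hconv x
      simp only [hS0, ContinuousLinearMap.zero_apply] at h1
      exact (tendsto_nhds_unique h1 tendsto_const_nhds)
    refine ⟨fun _ => 0, fun _ => 0, ?_, ?_⟩
    · intro x
      simp only [ContinuousLinearMap.zero_apply, zero_smul, Finset.sum_const_zero, hT0]
      exact tendsto_const_nhds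
    · intro nn
      have hz : (ContinuousLinearMap.smulRight (0 : X →L[ℝ] ℝ) (0 : W)) = 0 := by
        ext z; simp
      simp [hz, ← hC]
  -- main case 0 < C
  set A : ℕ → (X →L[ℝ] W) := fun p => Nat.casesOn p (S 0) fun q => S (q + 1) - S q with hA
  have hAfr : ∀ p, IsFiniteRank (A p) := by
    intro p
    cases p with
    | zero => exact hfr 0
    | succ q =>
      haveI i1 : FiniteDimensional ℝ (LinearMap.range ((S (q+1) : X →L[ℝ] W) : X →ₗ[ℝ] W)) :=
        hfr (q+1)
      haveI i2 : FiniteDimensional ℝ (LinearMap.range ((S q : X →L[ℝ] W) : X →ₗ[ℝ] W)) :=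
        hfr q
      haveI i3 : FiniteDimensional ℝ
          ((LinearMap.range ((S (q+1) : X →L[ℝ] W) : X →ₗ[ℝ] W) ⊔
            LinearMap.range ((S q : X →L[ℝ] W) : X →ₗ[ℝ] W) : Submodule ℝ W)) :=
        Submodule.finiteDimensional_sup _ _
      have hle : LinearMap.range ((A (q+1) : X →L[ℝ] W) : X →ₗ[ℝ] W) ≤
          LinearMap.range ((S (q+1) : X →L[ℝ] W) : X →ₗ[ℝ] W) ⊔
          LinearMap.range ((S q : X →L[ℝ] W) : X →ₗ[ℝ] W) := by
        rintro y ⟨x, rfl⟩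
        have h1 : S (q+1) x ∈ LinearMap.range ((S (q+1) : X →L[ℝ] W) : X →ₗ[ℝ] W) :=
          LinearMap.mem_range_self _ x
        have h2 : S q x ∈ LinearMap.range ((S q : X →L[ℝ] W) : X →ₗ[ℝ] W) :=
          LinearMap.mem_range_self _ x
        have heq : ((A (q+1) : X →L[ℝ] W) : X →ₗ[ℝ] W) x = S (q+1) x - S q x := by
          simp [hA]
        rw [heq, sub_eq_add_neg]
        exact Submodule.add_mem_sup h1 (Submodule.neg_mem _ h2)
      exact Submodule.finiteDimensional_of_le hle
  -- rank one decompositions of the differences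
  choose n g v hnpos hdecomp using fun p => exists_rank_one_decomp (A p) (hAfr p)
  set u : ℕ → ℕ → (X →L[ℝ] W) := fun p i => (g p i).smulRight (v p i) with hu
  set B : ℕ → ℝ := fun p => ∑ i ∈ Finset.range (n p), ‖g p i‖ * ‖v p i‖ with hB
  set δ : ℕ → ℝ := fun p => min (2 * C) ((1/2 : ℝ) ^ p) with hδ
  have hδpos : ∀ p, 0 < δ p := fun p => lt_min (by linarith) (by positivity)
  have hδle : ∀ p, δ p ≤ 2 * C := fun p => min_le_left _ _
  have hδle2 : ∀ p, δ p ≤ (1/2 : ℝ) ^ p := fun p => min_le_right _ _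
  have hmex : ∀ p, ∃ mm : ℕ, 0 < mm ∧ B p ≤ mm * δ p := by
    intro p
    obtain ⟨k, hk⟩ := exists_nat_ge (B p / δ p)
    refine ⟨k + 1, Nat.succ_pos k, ?_⟩
    have h1 : B p ≤ k * δ p := by
      rw [div_le_iff₀ (hδpos p)] at hk; exact hk
    have h2 : (k : ℝ) * δ p ≤ ((k + 1 : ℕ) : ℝ) * δ p := by
      have hkk : (k : ℝ) ≤ ((k + 1 : ℕ) : ℝ) := by exact_mod_cast Nat.le_succ k
      exact mul_le_mul_of_nonneg_right hkk (hδpos p).le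
    linarith
  choose m hmpos hmB using hmex
  have hminv : ∀ p, (0 : ℝ) < (m p : ℝ) := fun p => by exact_mod_cast hmpos p
  set L : ℕ → ℕ := fun p => m p * n p with hLdef
  have hLpos : ∀ p, 0 < L p := fun p => Nat.mul_pos (hmpos p) (hnpos p)
  set c : ℕ → ℕ := fun p => ∑ q ∈ Finset.range p, L q with hcdef
  have hcsucc : ∀ p, c (p + 1) = c p + L p := fun p => Finset.sum_range_succ _ _
  have hcmono : StrictMono c := strictMono_nat_of_lt_succ fun p => by
    rw [hcsucc]; exact Nat.lt_add_of_pos_right (hLpos p)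
  have hc0 : c 0 = 0 := by simp [hcdef]
  set pIdx : ℕ → ℕ := fun s => Nat.findGreatest (fun p => c p ≤ s) s with hpIdxdef
  have hpIdx_le : ∀ s, c (pIdx s) ≤ s := by
    intro s
    simp only [hpIdxdef]
    exact Nat.findGreatest_spec (P := fun p => c p ≤ s) (Nat.zero_le s)
      (by simp only [hc0]; exact Nat.zero_le s)
  have hpIdx_lt : ∀ s, s < c (pIdx s + 1) := by
    intro s
    by_contra hcon
    push_neg at hcon
    have h2 : pIdx s + 1 ≤ s := le_trans (hcmono.le_apply) hcon
    exact Nat.findGreatest_is_greatest (P := fun p => c p ≤ s) (Nat.lt_succ_self _) h2 hcon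
  have hpIdx_eq : ∀ p s, c p ≤ s → s < c (p + 1) → pIdx s = p := by
    intro p s h1 h2
    rcases lt_trichotomy (pIdx s) p with hlt | heq | hgt
    · exfalso
      have h3 : c (pIdx s + 1) ≤ c p := hcmono.monotone (Nat.succ_le_of_lt hlt)
      exact absurd (lt_of_lt_of_le (hpIdx_lt s) (le_trans h3 h1)) (lt_irrefl s)
    · exact heq
    · exfalso
      have h3 : c (p + 1) ≤ c (pIdx s) := hcmono.monotone (Nat.succ_le_of_lt hgt)
      exact absurd (lt_of_lt_of_le h2 (le_trans h3 (hpIdx_le s))) (lt_irrefl s)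
  have hpIdx_ge : ∀ p s, c p ≤ s → p ≤ pIdx s := fun p s h =>
    Nat.le_findGreatest (le_trans hcmono.le_apply h) h
  -- the frame
  set x' : ℕ → (X →L[ℝ] ℝ) := fun s =>
    ((m (pIdx s) : ℝ))⁻¹ • g (pIdx s) ((s - c (pIdx s)) % n (pIdx s)) with hx'def
  set w : ℕ → W := fun s => v (pIdx s) ((s - c (pIdx s)) % n (pIdx s)) with hwdef
  have hsm : ∀ (a : ℝ) (f : X →L[ℝ] ℝ) (y : W),
      (a • f).smulRight y = a • (f.smulRight y) := by
    intro a f y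
    ext z
    simp [mul_smul]
  have hterm : ∀ p t, t < L p →
      (x' (c p + t)).smulRight (w (c p + t)) = ((m p : ℝ))⁻¹ • u p (t % n p) := by
    intro p t ht
    have hp : pIdx (c p + t) = p :=
      hpIdx_eq p _ (Nat.le_add_right _ _) (by rw [hcsucc]; exact Nat.add_lt_add_left ht _)
    have hr : c p + t - c p = t := by omega
    simp only [hx'def, hwdef, hp, hr]
    exact hsm _ _ _
  have hblock : ∀ p r, r ≤ L p →
      ∑ t ∈ Finset.range r, (x' (c p + t)).smulRight (w (c p + t)) =
        ((m p : ℝ))⁻¹ • ((((r / n p : ℕ) : ℝ)) • A p + ∑ i ∈ Finset.range (r % n p), u p i) := by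
    intro p r hr
    have h1 : ∀ t ∈ Finset.range r, (x' (c p + t)).smulRight (w (c p + t)) =
        ((m p : ℝ))⁻¹ • u p (t % n p) := fun t ht =>
      hterm p t (lt_of_lt_of_le (Finset.mem_range.mp ht) hr)
    rw [Finset.sum_congr rfl h1, ← Finset.smul_sum, sum_range_mod',
      Nat.cast_smul_eq_nsmul, hdecomp p]
  set P : ℕ → (X →L[ℝ] W) := fun N => ∑ s ∈ Finset.range N, (x' s).smulRight (w s) with hPdef
  have hPc : ∀ p, P (c p) = ∑ q ∈ Finset.range p, A q := by
    intro p
    induction p with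
    | zero => simp [hPdef, hc0]
    | succ p ih =>
      simp only [hPdef] at ih ⊢
      rw [hcsucc, Finset.sum_range_add, ih, Finset.sum_range_succ]
      congr 1
      rw [hblock p (L p) le_rfl]
      have hdiv : L p / n p = m p := by
        simp only [hLdef]; exact Nat.mul_div_cancel (m p) (hnpos p)
      have hmod : L p % n p = 0 := by
        simp only [hLdef]; exact Nat.mul_mod_left _ _
      rw [hdiv, hmod]
      simp only [Finset.range_zero, Finset.sum_empty, add_zero]
      rw [smul_smul, inv_mul_cancel₀ (ne_of_gt (hminv p)), one_smul]
  have hSS : ∀ p, ∑ q ∈ Finset.range (p + 1), A q = S p := by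
    intro p
    induction p with
    | zero => simp [hA]
    | succ p ih =>
      rw [Finset.sum_range_succ, ih]
      show S p + (S (p + 1) - S p) = S (p + 1)
      abel
  have hSSnorm : ∀ p, ‖∑ q ∈ Finset.range p, A q‖ ≤ C := by
    intro p
    cases p with
    | zero => simpa using hC0
    | succ p => rw [hSS]; exact hnorm p
  have hAnorm : ∀ p, ‖A p‖ ≤ 2 * C := by
    intro p
    cases p with
    | zero =>
      have h0 := hnorm 0
      show ‖S 0‖ ≤ 2 * C
      linarith
    | succ p =>
      show ‖S (p + 1) - S p‖ ≤ 2 * C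
      have h1 := hnorm (p + 1)
      have h2 := hnorm p
      calc ‖S (p + 1) - S p‖ ≤ ‖S (p + 1)‖ + ‖S p‖ := norm_sub_le _ _
        _ ≤ 2 * C := by linarith
  have hrow : ∀ p k, k ≤ n p → ‖∑ i ∈ Finset.range k, u p i‖ ≤ B p := by
    intro p k hk
    calc ‖∑ i ∈ Finset.range k, u p i‖ ≤ ∑ i ∈ Finset.range k, ‖u p i‖ := norm_sum_le _ _
      _ ≤ ∑ i ∈ Finset.range (n p), ‖u p i‖ :=
        Finset.sum_le_sum_of_subset_of_nonneg (Finset.range_subset_range.mpr hk)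
          (fun i _ _ => norm_nonneg _)
      _ = B p := by
        simp only [hB, hu]
        exact Finset.sum_congr rfl fun i _ => ContinuousLinearMap.norm_smulRight_apply _ _
  have hrowop : ∀ p k, k ≤ n p →
      ‖((m p : ℝ))⁻¹ • ∑ i ∈ Finset.range k, u p i‖ ≤ δ p := by
    intro p k hk
    rw [norm_smul ((m p : ℝ))⁻¹ (∑ i ∈ Finset.range k, u p i), norm_inv, Real.norm_natCast]
    have h1 : ((m p : ℝ))⁻¹ * ‖∑ i ∈ Finset.range k, u p i‖ ≤ ((m p : ℝ))⁻¹ * B p :=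
      mul_le_mul_of_nonneg_left (hrow p k hk) (by positivity)
    have h2 : ((m p : ℝ))⁻¹ * B p ≤ ((m p : ℝ))⁻¹ * ((m p : ℝ) * δ p) :=
      mul_le_mul_of_nonneg_left (hmB p) (by positivity)
    have h3 : ((m p : ℝ))⁻¹ * ((m p : ℝ) * δ p) = δ p :=
      inv_mul_cancel_left₀ (ne_of_gt (hminv p)) _
    linarith
  have hjle : ∀ p r, r < L p → ((m p : ℝ))⁻¹ * ((r / n p : ℕ) : ℝ) ≤ 1 := by
    intro p r hrL
    have hj : r / n p < m p := (Nat.div_lt_iff_lt_mul (hnpos p)).mpr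
      (by simpa [hLdef] using hrL)
    have hjr : ((r / n p : ℕ) : ℝ) ≤ (m p : ℝ) := by exact_mod_cast hj.le
    have h4 := mul_le_mul_of_nonneg_left hjr (inv_nonneg.mpr (hminv p).le)
    rwa [inv_mul_cancel₀ (ne_of_gt (hminv p))] at h4
  have hjop : ∀ p r, r < L p →
      ‖((m p : ℝ))⁻¹ • (((r / n p : ℕ) : ℝ) • A p)‖ ≤ 2 * C := by
    intro p r hrL
    rw [smul_smul, norm_smul ((m p : ℝ)⁻¹ * ((r / n p : ℕ) : ℝ)) (A p)]
    have h1 : ‖(m p : ℝ)⁻¹ * ((r / n p : ℕ) : ℝ)‖ ≤ 1 := by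
      rw [Real.norm_of_nonneg (by positivity)]
      exact hjle p r hrL
    calc ‖(m p : ℝ)⁻¹ * ((r / n p : ℕ) : ℝ)‖ * ‖A p‖ ≤ 1 * (2 * C) :=
          mul_le_mul h1 (hAnorm p) (norm_nonneg _) zero_le_one
      _ = 2 * C := one_mul _
  have hrlt : ∀ N, N - c (pIdx N) < L (pIdx N) := by
    intro N
    have h1 := hpIdx_lt N
    rw [hcsucc] at h1
    have h2 := hpIdx_le N
    omega
  have hPN : ∀ N, P N = (∑ q ∈ Finset.range (pIdx N), A q) +
      ((m (pIdx N) : ℝ))⁻¹ • ((((N - c (pIdx N)) / n (pIdx N) : ℕ) : ℝ) • A (pIdx N)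
        + ∑ i ∈ Finset.range ((N - c (pIdx N)) % n (pIdx N)), u (pIdx N) i) := by
    intro N
    have h1 : N = c (pIdx N) + (N - c (pIdx N)) := by
      have := hpIdx_le N; omega
    calc P N = ∑ s ∈ Finset.range (c (pIdx N) + (N - c (pIdx N))),
          (x' s).smulRight (w s) := by rw [← h1]
      _ = P (c (pIdx N)) + ∑ t ∈ Finset.range (N - c (pIdx N)),
          (x' (c (pIdx N) + t)).smulRight (w (c (pIdx N) + t)) := by
          rw [Finset.sum_range_add]
      _ = _ := by rw [hPc, hblock _ _ (hrlt N).le]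
  have hPbound : ∀ N, ‖P N‖ ≤ 5 * C := by
    intro N
    rw [hPN N, smul_add]
    have e1 := hSSnorm (pIdx N)
    have e2 := hjop (pIdx N) (N - c (pIdx N)) (hrlt N)
    have e3 := hrowop (pIdx N) ((N - c (pIdx N)) % n (pIdx N))
      (Nat.mod_lt _ (hnpos (pIdx N))).le
    have e4 := hδle (pIdx N)
    calc ‖(∑ q ∈ Finset.range (pIdx N), A q) +
          (((m (pIdx N) : ℝ))⁻¹ • ((((N - c (pIdx N)) / n (pIdx N) : ℕ) : ℝ) • A (pIdx N)) +
           ((m (pIdx N) : ℝ))⁻¹ • ∑ i ∈ Finset.range ((N - c (pIdx N)) % n (pIdx N)),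
             u (pIdx N) i)‖
        ≤ ‖∑ q ∈ Finset.range (pIdx N), A q‖ +
          (‖((m (pIdx N) : ℝ))⁻¹ • ((((N - c (pIdx N)) / n (pIdx N) : ℕ) : ℝ) • A (pIdx N))‖ +
           ‖((m (pIdx N) : ℝ))⁻¹ • ∑ i ∈ Finset.range ((N - c (pIdx N)) % n (pIdx N)),
             u (pIdx N) i‖) := le_trans (norm_add_le _ _) (by gcongr; exact norm_add_le _ _)
      _ ≤ 5 * C := by linarith
  refine ⟨x', w, ?_, ?_⟩
  · -- IsOFrame
    intro x
    have hfx : ∀ N, ∑ k ∈ Finset.range N, x' k x • w k = P N x := by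
      intro N
      simp only [hPdef, ContinuousLinearMap.sum_apply]
      exact Finset.sum_congr rfl fun k _ => (ContinuousLinearMap.smulRight_apply).symm
    simp only [hfx]
    rw [Metric.tendsto_atTop]
    intro ε hε
    have hε3 : 0 < ε / 3 := by linarith
    have t1 : Tendsto (fun p => (∑ q ∈ Finset.range p, A q) x) atTop (𝓝 (T x)) := by
      apply (tendsto_add_atTop_iff_nat 1).mp
      have heq : (fun p => (∑ q ∈ Finset.range (p + 1), A q) x) = fun p => S p x := by
        funext p; rw [hSS p]
      rw [heq]
      exact hconv x
    have t2 : Tendsto (fun p => A p x) atTop (𝓝 0) := by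
      apply (tendsto_add_atTop_iff_nat 1).mp
      have heq : (fun p => A (p + 1) x) = fun p => S (p + 1) x - S p x := by
        funext p; simp [hA]
      rw [heq]
      have h := ((hconv x).comp (tendsto_add_atTop_nat 1)).sub (hconv x)
      simpa using h
    have t3 : Tendsto (fun p : ℕ => (1/2 : ℝ) ^ p * ‖x‖) atTop (𝓝 0) := by
      have h := tendsto_pow_atTop_nhds_zero_of_lt_one
        (by norm_num : (0:ℝ) ≤ 1/2) (by norm_num : (1/2 : ℝ) < 1)
      simpa using h.mul_const ‖x‖
    obtain ⟨p1, hp1⟩ := Metric.tendsto_atTop.mp t1 (ε/3) hε3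
    obtain ⟨p2, hp2⟩ := Metric.tendsto_atTop.mp t2 (ε/3) hε3
    obtain ⟨p3, hp3⟩ := Metric.tendsto_atTop.mp t3 (ε/3) hε3
    refine ⟨c (max p1 (max p2 p3)), fun N hN => ?_⟩
    have hpge : max p1 (max p2 p3) ≤ pIdx N := hpIdx_ge _ N hN
    have hpge1 : p1 ≤ pIdx N := le_trans (le_max_left _ _) hpge
    have hpge2 : p2 ≤ pIdx N := le_trans (le_trans (le_max_left _ _) (le_max_right _ _)) hpge
    have hpge3 : p3 ≤ pIdx N := le_trans (le_trans (le_max_right _ _) (le_max_right _ _)) hpge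
    have e1 : ‖(∑ q ∈ Finset.range (pIdx N), A q) x - T x‖ < ε/3 := by
      have h := hp1 (pIdx N) hpge1
      rwa [dist_eq_norm] at h
    have e2 : ‖((m (pIdx N) : ℝ))⁻¹ •
        ((((N - c (pIdx N)) / n (pIdx N) : ℕ) : ℝ) • A (pIdx N) x)‖ < ε/3 := by
      have hax : ‖A (pIdx N) x‖ < ε/3 := by
        have h := hp2 (pIdx N) hpge2
        rwa [dist_zero_right] at h
      rw [smul_smul]
      rw [norm_smul ((m (pIdx N) : ℝ)⁻¹ * (((N - c (pIdx N)) / n (pIdx N) : ℕ) : ℝ))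
        (A (pIdx N) x)]
      have hco : ‖(m (pIdx N) : ℝ)⁻¹ * (((N - c (pIdx N)) / n (pIdx N) : ℕ) : ℝ)‖ ≤ 1 := by
        rw [Real.norm_of_nonneg (by positivity)]
        exact hjle _ _ (hrlt N)
      calc ‖(m (pIdx N) : ℝ)⁻¹ * (((N - c (pIdx N)) / n (pIdx N) : ℕ) : ℝ)‖ * ‖A (pIdx N) x‖
          ≤ 1 * ‖A (pIdx N) x‖ := mul_le_mul_of_nonneg_right hco (norm_nonneg _)
        _ = ‖A (pIdx N) x‖ := one_mul _
        _ < ε/3 := hax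
    have e3 : ‖((m (pIdx N) : ℝ))⁻¹ •
        ((∑ i ∈ Finset.range ((N - c (pIdx N)) % n (pIdx N)), u (pIdx N) i) x)‖ < ε/3 := by
      have hop : ‖((m (pIdx N) : ℝ))⁻¹ •
          ∑ i ∈ Finset.range ((N - c (pIdx N)) % n (pIdx N)), u (pIdx N) i‖ ≤ δ (pIdx N) :=
        hrowop _ _ (Nat.mod_lt _ (hnpos (pIdx N))).le
      have happ : ‖(((m (pIdx N) : ℝ))⁻¹ •
          ∑ i ∈ Finset.range ((N - c (pIdx N)) % n (pIdx N)), u (pIdx N) i) x‖ ≤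
          δ (pIdx N) * ‖x‖ := le_trans (ContinuousLinearMap.le_opNorm _ x)
            (mul_le_mul_of_nonneg_right hop (norm_nonneg _))
      have hδx : δ (pIdx N) * ‖x‖ ≤ (1/2 : ℝ) ^ (pIdx N) * ‖x‖ :=
        mul_le_mul_of_nonneg_right (hδle2 _) (norm_nonneg _)
      have h3 : (1/2 : ℝ) ^ (pIdx N) * ‖x‖ < ε/3 := by
        have h := hp3 (pIdx N) hpge3
        rw [Real.dist_eq, sub_zero] at h
        exact lt_of_abs_lt h
      have hsm2 : (((m (pIdx N) : ℝ))⁻¹ •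
          ∑ i ∈ Finset.range ((N - c (pIdx N)) % n (pIdx N)), u (pIdx N) i) x =
          ((m (pIdx N) : ℝ))⁻¹ •
          ((∑ i ∈ Finset.range ((N - c (pIdx N)) % n (pIdx N)), u (pIdx N) i) x) := rfl
      rw [← hsm2]
      linarith
    have key : P N x - T x =
        ((∑ q ∈ Finset.range (pIdx N), A q) x - T x) +
        ((m (pIdx N) : ℝ))⁻¹ • ((((N - c (pIdx N)) / n (pIdx N) : ℕ) : ℝ) • A (pIdx N) x) +
        ((m (pIdx N) : ℝ))⁻¹ •
          ((∑ i ∈ Finset.range ((N - c (pIdx N)) % n (pIdx N)), u (pIdx N) i) x) := by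
      rw [hPN N]
      simp only [ContinuousLinearMap.add_apply, ContinuousLinearMap.smul_apply, smul_add]
      abel
    rw [dist_eq_norm, key]
    calc ‖((∑ q ∈ Finset.range (pIdx N), A q) x - T x) +
        ((m (pIdx N) : ℝ))⁻¹ • ((((N - c (pIdx N)) / n (pIdx N) : ℕ) : ℝ) • A (pIdx N) x) +
        ((m (pIdx N) : ℝ))⁻¹ •
          ((∑ i ∈ Finset.range ((N - c (pIdx N)) % n (pIdx N)), u (pIdx N) i) x)‖
        ≤ ‖(∑ q ∈ Finset.range (pIdx N), A q) x - T x‖ +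
          ‖((m (pIdx N) : ℝ))⁻¹ • ((((N - c (pIdx N)) / n (pIdx N) : ℕ) : ℝ) • A (pIdx N) x)‖ +
          ‖((m (pIdx N) : ℝ))⁻¹ •
            ((∑ i ∈ Finset.range ((N - c (pIdx N)) % n (pIdx N)), u (pIdx N) i) x)‖ :=
          norm_add₃_le
      _ < ε := by linarith
  · intro N
    have h := hPbound N
    simp only [hPdef] at h
    exact h
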